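/- Let M≤⁻ᵗ be the category defined exactly like M≤ save that it lacks the primitive arrow terms t_{x,y,z} and all the specific equations of M≤ (i.e., (rtδ), (rtσ) and (tb)). Then the functor G : M≤⁻ᵗ → Br (defined on M≤⁻ᵗ by the same clauses as on M≤) is faithful: for arrow terms f, g : A ⊢ B of M≤⁻ᵗ, if Gf = Gg in Br then f = g in M≤⁻ᵗ. -/

import Mathlib

/-! Formalization of categories of proofs for linear equality (Dosen-Petric),
with the generality functor G into the category Br of Brauerian diagrams,
represented here by the matching relation on occurrences of variables. -/

namespace DP

/-- Formulae: atomic formulae `x R y` (for the binary predicate in question),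
the constant true, and conjunctions. -/
inductive Fm (V : Type) : Type
  | rel : V → V → Fm V
  | top : Fm V
  | and : Fm V → Fm V → Fm V

/-- Occurrences of variables in a formula: `false`/`true` are respectively the
left-hand and right-hand occurrences of variables in an atomic formula. -/
def Occ {V : Type} : Fm V → Type
  | .rel _ _ => Bool
  | .top => Empty
  | .and A B => Occ A ⊕ Occ B

/-- The matching relation on `source ⊕ target` induced by a relabelling function
from target occurrences to source occurrences. -/
def relabel {α β : Type} (φ : β → α) : α ⊕ β → α ⊕ β → Prop :=
  fun u v => (∃ o, u = Sum.inl (φ o) ∧ v = Sum.inr o) ∨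
             (∃ o, u = Sum.inr o ∧ v = Sum.inl (φ o))

/-- The matching relation induced by a relabelling function from source occurrences
to target occurrences. -/
def corelabel {α β : Type} (ψ : α → β) : α ⊕ β → α ⊕ β → Prop :=
  fun u v => (∃ o, u = Sum.inl o ∧ v = Sum.inr (ψ o)) ∨
             (∃ o, u = Sum.inr (ψ o) ∧ v = Sum.inl o)

/-- Horizontal (side-by-side) composition of Brauerian diagrams. -/
def tensRel {α β γ δ : Type}
    (p : α ⊕ β → α ⊕ β → Prop) (q : γ ⊕ δ → γ ⊕ δ → Prop) :
    (α ⊕ γ) ⊕ (β ⊕ δ) → (α ⊕ γ) ⊕ (β ⊕ δ) → Prop :=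
  fun u v =>
    (∃ x y, p x y ∧ u = Sum.map Sum.inl Sum.inl x ∧ v = Sum.map Sum.inl Sum.inl y) ∨
    (∃ x y, q x y ∧ u = Sum.map Sum.inr Sum.inr x ∧ v = Sum.map Sum.inr Sum.inr y)

/-- Vertical composition of Brauerian diagrams: two endpoints are matched in the
composite when they are joined by a path of edges through the middle points. -/
def compRel {α β γ : Type}
    (p : α ⊕ β → α ⊕ β → Prop) (q : β ⊕ γ → β ⊕ γ → Prop) :
    α ⊕ γ → α ⊕ γ → Prop :=
  fun u v => u ≠ v ∧
    Relation.ReflTransGen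
      (fun s t : α ⊕ β ⊕ γ =>
        (∃ x y, p x y ∧ s = Sum.map (fun a => a) Sum.inl x ∧
                        t = Sum.map (fun a => a) Sum.inl y) ∨
        (∃ x y, q x y ∧ s = Sum.inr x ∧ t = Sum.inr y))
      (Sum.map (fun a => a) Sum.inr u) (Sum.map (fun a => a) Sum.inr v)

/-- Arrow terms. -/
inductive Ar (V : Type) : Fm V → Fm V → Type
  | id (A : Fm V) : Ar V A A
  | comp {A B C : Fm V} : Ar V B C → Ar V A B → Ar V A C
  | tens {A B C D : Fm V} : Ar V A B → Ar V C D → Ar V (.and A C) (.and B D)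
  | bto (A B C : Fm V) : Ar V (.and A (.and B C)) (.and (.and A B) C)
  | bfrom (A B C : Fm V) : Ar V (.and (.and A B) C) (.and A (.and B C))
  | dto (A : Fm V) : Ar V (.and A .top) A
  | dfrom (A : Fm V) : Ar V A (.and A .top)
  | sto (A : Fm V) : Ar V (.and .top A) A
  | sfrom (A : Fm V) : Ar V A (.and .top A)
  | r (x : V) : Ar V .top (.rel x x)

/-- The Brauerian diagram (matching relation on occurrences of variables in
source and target) associated with an arrow term: the image under the functor G. -/
def GRel {V : Type} : ∀ {A B : Fm V}, Ar V A B → (Occ A ⊕ Occ B → Occ A ⊕ Occ B → Prop)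
  | _, _, .id _ => relabel (fun o => o)
  | _, _, .comp g f => compRel (GRel f) (GRel g)
  | _, _, .tens f g => tensRel (GRel f) (GRel g)
  | _, _, .bto _ _ _ => relabel (fun o =>
      match o with
      | Sum.inl (Sum.inl a) => Sum.inl a
      | Sum.inl (Sum.inr b) => Sum.inr (Sum.inl b)
      | Sum.inr c => Sum.inr (Sum.inr c))
  | _, _, .bfrom _ _ _ => relabel (fun o =>
      match o with
      | Sum.inl a => Sum.inl (Sum.inl a)
      | Sum.inr (Sum.inl b) => Sum.inl (Sum.inr b)
      | Sum.inr (Sum.inr c) => Sum.inr c)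
  | _, _, .dto _ => relabel Sum.inl
  | _, _, .dfrom _ => corelabel Sum.inl
  | _, _, .sto _ => relabel Sum.inr
  | _, _, .sfrom _ => corelabel Sum.inr
  | _, _, .r _ => fun u v =>
      (u = Sum.inr false ∧ v = Sum.inr true) ∨ (u = Sum.inr true ∧ v = Sum.inr false)

/-- Equality of arrow terms: the smallest congruence generated by the defining
equations of the category. -/
inductive Eqv {V : Type} : ∀ {A B : Fm V}, Ar V A B → Ar V A B → Prop
  | refl {A B : Fm V} (f : Ar V A B) : Eqv f f
  | symm {A B : Fm V} {f g : Ar V A B} : Eqv f g → Eqv g f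
  | trans {A B : Fm V} {f g h : Ar V A B} : Eqv f g → Eqv g h → Eqv f h
  | congr_comp {A B C : Fm V} {g g' : Ar V B C} {f f' : Ar V A B} :
      Eqv g g' → Eqv f f' → Eqv (g.comp f) (g'.comp f')
  | congr_tens {A B C D : Fm V} {f f' : Ar V A B} {g g' : Ar V C D} :
      Eqv f f' → Eqv g g' → Eqv (f.tens g) (f'.tens g')
  | id_comp {A B : Fm V} (f : Ar V A B) : Eqv ((Ar.id B).comp f) f
  | comp_id {A B : Fm V} (f : Ar V A B) : Eqv (f.comp (Ar.id A)) f
  | comp_assoc {A B C D : Fm V} (h : Ar V C D) (g : Ar V B C) (f : Ar V A B) :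
      Eqv ((h.comp g).comp f) (h.comp (g.comp f))
  | tens_id (A B : Fm V) : Eqv ((Ar.id A).tens (Ar.id B)) (Ar.id (.and A B))
  | tens_comp {A1 B1 C1 A2 B2 C2 : Fm V} (g1 : Ar V B1 C1) (f1 : Ar V A1 B1)
      (g2 : Ar V B2 C2) (f2 : Ar V A2 B2) :
      Eqv ((g1.comp f1).tens (g2.comp f2)) ((g1.tens g2).comp (f1.tens f2))
  | nat_b {A B C D E F : Fm V} (f : Ar V A D) (g : Ar V B E) (h : Ar V C F) :
      Eqv (((f.tens g).tens h).comp (Ar.bto A B C)) ((Ar.bto D E F).comp (f.tens (g.tens h)))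
  | nat_d {A D : Fm V} (f : Ar V A D) :
      Eqv (f.comp (Ar.dto A)) ((Ar.dto D).comp (f.tens (Ar.id .top)))
  | nat_s {A D : Fm V} (f : Ar V A D) :
      Eqv (f.comp (Ar.sto A)) ((Ar.sto D).comp ((Ar.id .top).tens f))
  | bb1 (A B C : Fm V) : Eqv ((Ar.bfrom A B C).comp (Ar.bto A B C)) (Ar.id (.and A (.and B C)))
  | bb2 (A B C : Fm V) : Eqv ((Ar.bto A B C).comp (Ar.bfrom A B C)) (Ar.id (.and (.and A B) C))
  | dd1 (A : Fm V) : Eqv ((Ar.dfrom A).comp (Ar.dto A)) (Ar.id (.and A .top))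
  | dd2 (A : Fm V) : Eqv ((Ar.dto A).comp (Ar.dfrom A)) (Ar.id A)
  | ss1 (A : Fm V) : Eqv ((Ar.sfrom A).comp (Ar.sto A)) (Ar.id (.and .top A))
  | ss2 (A : Fm V) : Eqv ((Ar.sto A).comp (Ar.sfrom A)) (Ar.id A)
  | pent (A B C D : Fm V) :
      Eqv ((Ar.bto (.and A B) C D).comp (Ar.bto A B (.and C D)))
        (((Ar.bto A B C).tens (Ar.id D)).comp
          ((Ar.bto A (.and B C) D).comp ((Ar.id A).tens (Ar.bto B C D))))
  | bds (A C : Fm V) :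
      Eqv (Ar.bto A .top C) (((Ar.dfrom A).tens (Ar.id C)).comp ((Ar.id A).tens (Ar.sto C)))

variable {V : Type}

/-! ### The quotient category -/

instance arSetoid (V : Type) (A B : Fm V) : Setoid (Ar V A B) :=
  ⟨Eqv, ⟨Eqv.refl, Eqv.symm, Eqv.trans⟩⟩

def Q (V : Type) (A B : Fm V) := Quotient (arSetoid V A B)

def Q.mk {A B : Fm V} (f : Ar V A B) : Q V A B := Quotient.mk _ f

def Q.comp {A B C : Fm V} : Q V B C → Q V A B → Q V A C :=
  Quotient.map₂ Ar.comp (fun _ _ h _ _ h' => Eqv.congr_comp h h')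

def Q.tens {A B C D : Fm V} : Q V A B → Q V C D → Q V (A.and C) (B.and D) :=
  Quotient.map₂ Ar.tens (fun _ _ h _ _ h' => Eqv.congr_tens h h')

local infixl:80 " ⬝ " => Q.comp
local infixl:85 " ⧆ " => Q.tens

@[simp] theorem Q.mk_comp {A B C : Fm V} (g : Ar V B C) (f : Ar V A B) :
    Q.mk (g.comp f) = Q.mk g ⬝ Q.mk f := rfl

@[simp] theorem Q.mk_tens {A B C D : Fm V} (f : Ar V A B) (g : Ar V C D) :
    Q.mk (f.tens g) = Q.mk f ⧆ Q.mk g := rfl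

theorem Q.sound {A B : Fm V} {f g : Ar V A B} (h : Eqv f g) : Q.mk f = Q.mk g :=
  Quotient.sound h

theorem Q.exact {A B : Fm V} {f g : Ar V A B} (h : Q.mk f = Q.mk g) : Eqv f g :=
  Quotient.exact h

@[simp] theorem Q.id_comp {A B : Fm V} (f : Q V A B) : Q.mk (Ar.id B) ⬝ f = f := by
  induction f using Quotient.ind; exact Q.sound (Eqv.id_comp _)

@[simp] theorem Q.comp_id {A B : Fm V} (f : Q V A B) : f ⬝ Q.mk (Ar.id A) = f := by
  induction f using Quotient.ind; exact Q.sound (Eqv.comp_id _)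

theorem Q.assoc {A B C D : Fm V} (h : Q V C D) (g : Q V B C) (f : Q V A B) :
    (h ⬝ g) ⬝ f = h ⬝ (g ⬝ f) := by
  induction h using Quotient.ind; induction g using Quotient.ind
  induction f using Quotient.ind; exact Q.sound (Eqv.comp_assoc _ _ _)

@[simp] theorem Q.tens_id (A B : Fm V) :
    Q.mk (Ar.id A) ⧆ Q.mk (Ar.id B) = Q.mk (Ar.id (A.and B)) :=
  Q.sound (Eqv.tens_id A B)

theorem Q.tens_comp {A1 B1 C1 A2 B2 C2 : Fm V} (g1 : Q V B1 C1) (f1 : Q V A1 B1)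
    (g2 : Q V B2 C2) (f2 : Q V A2 B2) :
    (g1 ⬝ f1) ⧆ (g2 ⬝ f2) = (g1 ⧆ g2) ⬝ (f1 ⧆ f2) := by
  induction g1 using Quotient.ind; induction f1 using Quotient.ind
  induction g2 using Quotient.ind; induction f2 using Quotient.ind
  exact Q.sound (Eqv.tens_comp _ _ _ _)


/-! ### Inverses in the quotient category -/

def Q.Inv {A B : Fm V} (f : Q V A B) (g : Q V B A) : Prop :=
  g ⬝ f = Q.mk (Ar.id A) ∧ f ⬝ g = Q.mk (Ar.id B)

theorem Q.Inv.unique {A B : Fm V} {f : Q V A B} {g g' : Q V B A}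
    (h : Q.Inv f g) (h' : Q.Inv f g') : g = g' := by
  calc g = g ⬝ (f ⬝ g') := by rw [h'.2, Q.comp_id]
    _ = (g ⬝ f) ⬝ g' := by rw [Q.assoc]
    _ = g' := by rw [h.1, Q.id_comp]

theorem Q.Inv.comp {A B C : Fm V} {f : Q V A B} {f' : Q V B A} {g : Q V B C} {g' : Q V C B}
    (hf : Q.Inv f f') (hg : Q.Inv g g') : Q.Inv (g ⬝ f) (f' ⬝ g') := by
  constructor
  · calc (f' ⬝ g') ⬝ (g ⬝ f) = f' ⬝ ((g' ⬝ g) ⬝ f) := by rw [Q.assoc, Q.assoc]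
      _ = Q.mk (Ar.id A) := by rw [hg.1, Q.id_comp, hf.1]
  · calc (g ⬝ f) ⬝ (f' ⬝ g') = g ⬝ ((f ⬝ f') ⬝ g') := by rw [Q.assoc, Q.assoc]
      _ = Q.mk (Ar.id C) := by rw [hf.2, Q.id_comp, hg.2]

theorem Q.Inv.tens {A B C D : Fm V} {f : Q V A B} {f' : Q V B A} {g : Q V C D} {g' : Q V D C}
    (hf : Q.Inv f f') (hg : Q.Inv g g') : Q.Inv (f ⧆ g) (f' ⧆ g') := by
  constructor
  · rw [← Q.tens_comp, hf.1, hg.1, Q.tens_id]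
  · rw [← Q.tens_comp, hf.2, hg.2, Q.tens_id]

theorem Q.Inv.symm {A B : Fm V} {f : Q V A B} {g : Q V B A} (h : Q.Inv f g) : Q.Inv g f :=
  ⟨h.2, h.1⟩

theorem Q.inv_b {A B C : Fm V} : Q.Inv (Q.mk (Ar.bto A B C)) (Q.mk (Ar.bfrom A B C)) :=
  ⟨Q.sound (Eqv.bb1 A B C), Q.sound (Eqv.bb2 A B C)⟩

theorem Q.inv_d {A : Fm V} : Q.Inv (Q.mk (Ar.dto A)) (Q.mk (Ar.dfrom A)) :=
  ⟨Q.sound (Eqv.dd1 A), Q.sound (Eqv.dd2 A)⟩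

theorem Q.inv_s {A : Fm V} : Q.Inv (Q.mk (Ar.sto A)) (Q.mk (Ar.sfrom A)) :=
  ⟨Q.sound (Eqv.ss1 A), Q.sound (Eqv.ss2 A)⟩

theorem Q.inv_id {A : Fm V} : Q.Inv (Q.mk (Ar.id A)) (Q.mk (Ar.id A)) :=
  ⟨Q.id_comp _, Q.id_comp _⟩

/-- Shift an equation along inverses: from `x ⬝ u = v ⬝ y` deduce `y ⬝ u' = v' ⬝ x`. -/
theorem Q.swap_inv {A A' B B' : Fm V} {u : Q V A A'} {u' : Q V A' A}
    {v : Q V B B'} {v' : Q V B' B} {x : Q V A' B'} {y : Q V A B}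
    (hu : Q.Inv u u') (hv : Q.Inv v v') (h : x ⬝ u = v ⬝ y) : y ⬝ u' = v' ⬝ x := by
  calc y ⬝ u' = v' ⬝ ((v ⬝ y) ⬝ u') := by rw [← Q.assoc, ← Q.assoc, hv.1, Q.id_comp]
    _ = v' ⬝ ((x ⬝ u) ⬝ u') := by rw [h]
    _ = v' ⬝ x := by rw [Q.assoc, hu.2, Q.comp_id]

/-- Naturality of `bfrom` (derived). -/
theorem Q.nat_b' {A B C D E F : Fm V} (f : Q V A D) (g : Q V B E) (h : Q V C F) :
    (f ⧆ (g ⧆ h)) ⬝ Q.mk (Ar.bfrom A B C) = Q.mk (Ar.bfrom D E F) ⬝ ((f ⧆ g) ⧆ h) := by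
  apply Q.swap_inv Q.inv_b Q.inv_b
  induction f using Quotient.ind; induction g using Quotient.ind
  induction h using Quotient.ind
  exact Q.sound (Eqv.nat_b _ _ _)

theorem Q.nat_d0 {A D : Fm V} (f : Q V A D) :
    f ⬝ Q.mk (Ar.dto A) = Q.mk (Ar.dto D) ⬝ (f ⧆ Q.mk (Ar.id .top)) := by
  induction f using Quotient.ind; exact Q.sound (Eqv.nat_d _)

theorem Q.nat_s0 {A D : Fm V} (f : Q V A D) :
    f ⬝ Q.mk (Ar.sto A) = Q.mk (Ar.sto D) ⬝ (Q.mk (Ar.id .top) ⧆ f) := by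
  induction f using Quotient.ind; exact Q.sound (Eqv.nat_s _)

theorem Q.nat_d' {A D : Fm V} (f : Q V A D) :
    (f ⧆ Q.mk (Ar.id .top)) ⬝ Q.mk (Ar.dfrom A) = Q.mk (Ar.dfrom D) ⬝ f :=
  Q.swap_inv Q.inv_d Q.inv_d (Q.nat_d0 f)

theorem Q.nat_s' {A D : Fm V} (f : Q V A D) :
    (Q.mk (Ar.id .top) ⧆ f) ⬝ Q.mk (Ar.sfrom A) = Q.mk (Ar.sfrom D) ⬝ f :=
  Q.swap_inv Q.inv_s Q.inv_s (Q.nat_s0 f)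

/-! ### Coherence terms -/

inductive CT (V : Type) : Fm V → Fm V → Type
  | id (A : Fm V) : CT V A A
  | comp {A B C : Fm V} : CT V B C → CT V A B → CT V A C
  | tens {A B C D : Fm V} : CT V A B → CT V C D → CT V (.and A C) (.and B D)
  | bto (A B C : Fm V) : CT V (.and A (.and B C)) (.and (.and A B) C)
  | bfrom (A B C : Fm V) : CT V (.and (.and A B) C) (.and A (.and B C))
  | dto (A : Fm V) : CT V (.and A .top) A
  | dfrom (A : Fm V) : CT V A (.and A .top)
  | sto (A : Fm V) : CT V (.and .top A) A
  | sfrom (A : Fm V) : CT V A (.and .top A)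

def ι : ∀ {A B : Fm V}, CT V A B → Ar V A B
  | _, _, .id A => .id A
  | _, _, .comp g f => (ι g).comp (ι f)
  | _, _, .tens f g => (ι f).tens (ι g)
  | _, _, .bto A B C => .bto A B C
  | _, _, .bfrom A B C => .bfrom A B C
  | _, _, .dto A => .dto A
  | _, _, .dfrom A => .dfrom A
  | _, _, .sto A => .sto A
  | _, _, .sfrom A => .sfrom A

def cinv : ∀ {A B : Fm V}, CT V A B → CT V B A
  | _, _, .id A => .id A
  | _, _, .comp g f => (cinv f).comp (cinv g)
  | _, _, .tens f g => (cinv f).tens (cinv g)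
  | _, _, .bto A B C => .bfrom A B C
  | _, _, .bfrom A B C => .bto A B C
  | _, _, .dto A => .dfrom A
  | _, _, .dfrom A => .dto A
  | _, _, .sto A => .sfrom A
  | _, _, .sfrom A => .sto A

theorem cinv_inv {A B : Fm V} (c : CT V A B) : Q.Inv (Q.mk (ι c)) (Q.mk (ι (cinv c))) := by
  induction c with
  | id A => exact Q.inv_id
  | comp g f ihg ihf => exact (Q.Inv.comp ihf ihg)
  | tens f g ihf ihg => exact (Q.Inv.tens ihf ihg)
  | bto A B C => exact Q.inv_b
  | bfrom A B C => exact Q.inv_b.symm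
  | dto A => exact Q.inv_d
  | dfrom A => exact Q.inv_d.symm
  | sto A => exact Q.inv_s
  | sfrom A => exact Q.inv_s.symm

/-! ### Bridge to the free monoidal category -/

open CategoryTheory in
def toF : Fm V → FreeMonoidalCategory (V × V)
  | .rel x y => .of (x, y)
  | .top => .unit
  | .and A B => .tensor (toF A) (toF B)

open CategoryTheory in
def obF : FreeMonoidalCategory (V × V) → Fm V
  | .of p => .rel p.1 p.2
  | .unit => .top
  | .tensor X Y => .and (obF X) (obF Y)

attribute [reducible] obF toF

theorem obF_toF (A : Fm V) : obF (toF A) = A := by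
  induction A with
  | rel x y => rfl
  | top => rfl
  | and A B ihA ihB => show Fm.and (obF (toF A)) (obF (toF B)) = _; rw [ihA, ihB]

open CategoryTheory in
@[simp] theorem obF_tensorObj (X Y : FreeMonoidalCategory (V × V)) :
    obF (MonoidalCategory.tensorObj X Y) = .and (obF X) (obF Y) := rfl

open CategoryTheory in
@[simp] theorem obF_tensor (X Y : FreeMonoidalCategory (V × V)) :
    obF (FreeMonoidalCategory.tensor X Y) = .and (obF X) (obF Y) := rfl

open CategoryTheory in
@[simp] theorem obF_unit' : obF (V := V) (MonoidalCategory.tensorUnit _) = .top := rfl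

@[simp] theorem obF_unit : obF ((.unit) : CategoryTheory.FreeMonoidalCategory (V × V)) = .top := rfl

open CategoryTheory in
def FcH : ∀ {A B : Fm V}, CT V A B → FreeMonoidalCategory.Hom (toF A) (toF B)
  | _, _, .id A => .id _
  | _, _, .comp g f => .comp (FcH f) (FcH g)
  | _, _, .tens f g => .tensor (FcH f) (FcH g)
  | _, _, .bto _ _ _ => .α_inv _ _ _
  | _, _, .bfrom _ _ _ => .α_hom _ _ _
  | _, _, .dto _ => .ρ_hom _
  | _, _, .dfrom _ => .ρ_inv _
  | _, _, .sto _ => .l_hom _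
  | _, _, .sfrom _ => .l_inv _

open CategoryTheory in
def uh : ∀ {X Y : FreeMonoidalCategory (V × V)}, FreeMonoidalCategory.Hom X Y →
    Ar V (obF X) (obF Y)
  | _, _, .id X => .id _
  | _, _, .α_hom _ _ _ => .bfrom _ _ _
  | _, _, .α_inv _ _ _ => .bto _ _ _
  | _, _, .l_hom _ => .sto _
  | _, _, .l_inv _ => .sfrom _
  | _, _, .ρ_hom _ => .dto _
  | _, _, .ρ_inv _ => .dfrom _
  | _, _, .comp f g => (uh g).comp (uh f)
  | _, _, .whiskerLeft X f => (Ar.id (obF X)).tens (uh f)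
  | _, _, .whiskerRight f Y => (uh f).tens (Ar.id (obF Y))
  | _, _, .tensor f g => (uh f).tens (uh g)

open CategoryTheory FreeMonoidalCategory in
theorem uh_sound {X Y : FreeMonoidalCategory (V × V)} {p q : FreeMonoidalCategory.Hom X Y}
    (h : HomEquiv p q) : Q.mk (uh p) = Q.mk (uh q) := by
  induction h with
  | refl => rfl
  | symm _ _ _ ih => exact ih.symm
  | trans _ _ ih ih' => exact ih.trans ih'
  | comp _ _ ihf ihg => simp only [uh, Q.mk_comp, ihf, ihg]
  | whiskerLeft X _ _ _ ih => simp only [uh, Q.mk_tens, ih]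
  | whiskerRight _ _ _ _ ih => simp only [uh, Q.mk_tens, ih]
  | tensor _ _ ihf ihg => simp only [uh, Q.mk_tens, ihf, ihg]
  | tensorHom_def f g =>
      simp only [uh, Q.mk_tens, Q.mk_comp]
      rw [← Q.tens_comp]
      simp
  | comp_id f => simp only [uh, Q.mk_comp]; simp
  | id_comp f => simp only [uh, Q.mk_comp]; simp
  | assoc f g h => simp only [uh, Q.mk_comp]; rw [Q.assoc]
  | id_tensorHom_id => simp only [uh, Q.mk_tens]; rw [Q.tens_id]
  | tensorHom_comp_tensorHom f₁ f₂ g₁ g₂ =>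
      simp only [uh, Q.mk_tens, Q.mk_comp]; rw [Q.tens_comp]
  | whiskerLeft_id X Y => simp only [uh, Q.mk_tens]; rw [Q.tens_id]
  | id_whiskerRight X Y => simp only [uh, Q.mk_tens]; rw [Q.tens_id]
  | α_hom_inv => exact Q.sound (Eqv.bb2 _ _ _)
  | α_inv_hom => exact Q.sound (Eqv.bb1 _ _ _)
  | associator_naturality f₁ f₂ f₃ =>
      simp only [uh, Q.mk_comp, Q.mk_tens]
      exact (Q.nat_b' (Q.mk (uh f₁)) (Q.mk (uh f₂)) (Q.mk (uh f₃))).symm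
  | ρ_hom_inv => exact Q.sound (Eqv.dd1 _)
  | ρ_inv_hom => exact Q.sound (Eqv.dd2 _)
  | ρ_naturality f =>
      simp only [uh, Q.mk_comp, Q.mk_tens]
      exact (Q.nat_d0 (Q.mk (uh f))).symm
  | l_hom_inv => exact Q.sound (Eqv.ss1 _)
  | l_inv_hom => exact Q.sound (Eqv.ss2 _)
  | l_naturality f =>
      simp only [uh, Q.mk_comp, Q.mk_tens]
      exact (Q.nat_s0 (Q.mk (uh f))).symm
  | @pentagon W X Y Z =>
      simp only [uh, Q.mk_comp, Q.mk_tens]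
      apply Q.Inv.unique (f := Q.mk (Ar.bto (.and (obF W) (obF X)) (obF Y) (obF Z)) ⬝
        Q.mk (Ar.bto (obF W) (obF X) (.and (obF Y) (obF Z))))
      · -- inverse via pentagon RHS rearranged
        have hp : Q.mk (Ar.bto (.and (obF W) (obF X)) (obF Y) (obF Z)) ⬝
            Q.mk (Ar.bto (obF W) (obF X) (.and (obF Y) (obF Z))) =
            (Q.mk (Ar.bto (obF W) (obF X) (obF Y)) ⧆ Q.mk (Ar.id (obF Z))) ⬝
            (Q.mk (Ar.bto (obF W) (.and (obF X) (obF Y)) (obF Z)) ⬝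
              (Q.mk (Ar.id (obF W)) ⧆ Q.mk (Ar.bto (obF X) (obF Y) (obF Z)))) :=
          Q.sound (Eqv.pent _ _ _ _)
        rw [hp]
        exact Q.Inv.comp (Q.Inv.comp (Q.Inv.tens Q.inv_id Q.inv_b) Q.inv_b)
          (Q.Inv.tens Q.inv_b Q.inv_id)
      · exact Q.Inv.comp Q.inv_b Q.inv_b
  | @triangle X Y =>
      simp only [uh, Q.mk_comp, Q.mk_tens]
      have hb : Q.mk (Ar.bfrom (obF X) .top (obF Y)) =
          (Q.mk (Ar.id (obF X)) ⧆ Q.mk (Ar.sfrom (obF Y))) ⬝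
            (Q.mk (Ar.dto (obF X)) ⧆ Q.mk (Ar.id (obF Y))) := by
        apply Q.Inv.unique (f := Q.mk (Ar.bto (obF X) .top (obF Y)))
        · exact Q.inv_b
        · have hp : Q.mk (Ar.bto (obF X) .top (obF Y)) =
              (Q.mk (Ar.dfrom (obF X)) ⧆ Q.mk (Ar.id (obF Y))) ⬝
                (Q.mk (Ar.id (obF X)) ⧆ Q.mk (Ar.sto (obF Y))) := Q.sound (Eqv.bds _ _)
          rw [hp]
          exact Q.Inv.comp (Q.Inv.tens Q.inv_id Q.inv_s) (Q.Inv.tens Q.inv_d.symm Q.inv_id)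
      show (Q.mk (Ar.id (obF X)) ⧆ Q.mk (Ar.sto (obF Y))) ⬝ Q.mk (Ar.bfrom (obF X) .top (obF Y)) =
        Q.mk (Ar.dto (obF X)) ⧆ Q.mk (Ar.id (obF Y))
      rw [hb, ← Q.assoc, ← Q.tens_comp]
      rw [Q.id_comp, (Q.inv_s (A := obF Y)).2, Q.tens_id, Q.id_comp]

/-! ### The coherence theorem for coherence terms -/

def castAr {A A' B B' : Fm V} (h : A = A') (k : B = B') (f : Ar V A B) : Ar V A' B' :=
  h ▸ k ▸ f

theorem cast_id {X X' : Fm V} (hx : X = X') (h : X = X') (k : X = X') :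
    castAr h k (Ar.id X) = Ar.id X' := by subst hx; rfl

theorem cast_comp {A A' B B' C C' : Fm V} (ha : A = A') (hb : B = B') (hc : C = C')
    (h : A = A') (k : C = C') (g : Ar V B C) (f : Ar V A B) :
    castAr h k (g.comp f) = (castAr hb hc g).comp (castAr ha hb f) := by
  subst ha; subst hb; subst hc; rfl

theorem cast_tens {A A' B B' C C' D D' : Fm V} (ha : A = A') (hb : B = B')
    (hc : C = C') (hd : D = D')
    (h : Fm.and A C = Fm.and A' C') (k : Fm.and B D = Fm.and B' D')
    (f : Ar V A B) (g : Ar V C D) :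
    castAr h k (f.tens g) = (castAr ha hb f).tens (castAr hc hd g) := by
  subst ha; subst hb; subst hc; subst hd; rfl

theorem cast_bto {X X' Y Y' Z Z' : Fm V} (hx : X = X') (hy : Y = Y') (hz : Z = Z')
    (h : Fm.and X (Fm.and Y Z) = Fm.and X' (Fm.and Y' Z'))
    (k : Fm.and (Fm.and X Y) Z = Fm.and (Fm.and X' Y') Z') :
    castAr h k (Ar.bto X Y Z) = Ar.bto X' Y' Z' := by subst hx; subst hy; subst hz; rfl

theorem cast_bfrom {X X' Y Y' Z Z' : Fm V} (hx : X = X') (hy : Y = Y') (hz : Z = Z')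
    (h : Fm.and (Fm.and X Y) Z = Fm.and (Fm.and X' Y') Z')
    (k : Fm.and X (Fm.and Y Z) = Fm.and X' (Fm.and Y' Z')) :
    castAr h k (Ar.bfrom X Y Z) = Ar.bfrom X' Y' Z' := by subst hx; subst hy; subst hz; rfl

theorem cast_dto {X X' : Fm V} (hx : X = X') (h : Fm.and X .top = Fm.and X' .top)
    (k : X = X') : castAr h k (Ar.dto X) = Ar.dto X' := by subst hx; rfl

theorem cast_dfrom {X X' : Fm V} (hx : X = X') (h : X = X')
    (k : Fm.and X .top = Fm.and X' .top) :
    castAr h k (Ar.dfrom X) = Ar.dfrom X' := by subst hx; rfl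

theorem cast_sto {X X' : Fm V} (hx : X = X') (h : Fm.and .top X = Fm.and .top X')
    (k : X = X') : castAr h k (Ar.sto X) = Ar.sto X' := by subst hx; rfl

theorem cast_sfrom {X X' : Fm V} (hx : X = X') (h : X = X')
    (k : Fm.and .top X = Fm.and .top X') :
    castAr h k (Ar.sfrom X) = Ar.sfrom X' := by subst hx; rfl

theorem uhFc {A B : Fm V} (c : CT V A B) :
    ι c = castAr (obF_toF A) (obF_toF B) (uh (FcH c)) := by
  induction c with
  | id A => exact (cast_id (obF_toF A) _ _).symm
  | comp g f ihg ihf =>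
      show (ι g).comp (ι f) = castAr _ _ ((uh (FcH g)).comp (uh (FcH f)))
      rw [cast_comp (obF_toF _) (obF_toF _) (obF_toF _), ← ihg, ← ihf]
  | tens f g ihf ihg =>
      show (ι f).tens (ι g) = castAr _ _ ((uh (FcH f)).tens (uh (FcH g)))
      rw [cast_tens (obF_toF _) (obF_toF _) (obF_toF _) (obF_toF _), ← ihf, ← ihg]
  | bto A B C => exact (cast_bto (obF_toF A) (obF_toF B) (obF_toF C) _ _).symm
  | bfrom A B C => exact (cast_bfrom (obF_toF A) (obF_toF B) (obF_toF C) _ _).symm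
  | dto A => exact (cast_dto (obF_toF A) _ _).symm
  | dfrom A => exact (cast_dfrom (obF_toF A) _ _).symm
  | sto A => exact (cast_sto (obF_toF A) _ _).symm
  | sfrom A => exact (cast_sfrom (obF_toF A) _ _).symm

theorem cast_mk_congr {A A' B B' : Fm V} (h : A = A') (k : B = B') {f g : Ar V A B}
    (hfg : Q.mk f = Q.mk g) : Q.mk (castAr h k f) = Q.mk (castAr h k g) := by
  subst h; subst k; exact hfg

open CategoryTheory in
/-- Coherence: any two coherence terms with the same source and target are equal
in the quotient category. -/
theorem coherence {A B : Fm V} (c c' : CT V A B) : Q.mk (ι c) = Q.mk (ι c') := by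
  have hq : (⟦FcH c⟧ : toF A ⟶ toF B) = ⟦FcH c'⟧ :=
    (FreeMonoidalCategory.subsingleton_hom (toF A) (toF B)).elim _ _
  have he : FreeMonoidalCategory.HomEquiv (FcH c) (FcH c') := Quotient.exact hq
  have h2 := uh_sound (V := V) he
  rw [uhFc c, uhFc c']
  exact cast_mk_congr _ _ h2


/-! ### Matches: functional representation of the Brauerian diagrams in the image of G -/

structure Match (α β : Type) where
  s : β → α ⊕ β
  i : α → β
  h1 : ∀ a, s (i a) = .inl a
  h2 : ∀ b a, s b = .inl a → i a = b
  h3 : ∀ b b', s b = .inr b' → b' ≠ b ∧ s b' = .inr b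

theorem Match.ext' {α β : Type} {m m' : Match α β} (hs : m.s = m'.s) (hi : m.i = m'.i) :
    m = m' := by
  cases m; cases m'; simp_all

theorem Match.i_inj {α β : Type} (m : Match α β) {a a' : α} (h : m.i a = m.i a') : a = a' := by
  have := m.h1 a; rw [h, m.h1 a'] at this; exact (Sum.inl.inj this).symm

/-- The Brauerian diagram of a match. -/
def R {α β : Type} (m : Match α β) : α ⊕ β → α ⊕ β → Prop := fun u v =>
  (∃ a, u = Sum.inl a ∧ v = Sum.inr (m.i a)) ∨
  (∃ a, v = Sum.inl a ∧ u = Sum.inr (m.i a)) ∨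
  (∃ b b', m.s b = Sum.inr b' ∧ u = Sum.inr b ∧ v = Sum.inr b')

def Match.ofBij {α β : Type} (φ : β → α) (ψ : α → β)
    (hψφ : ∀ b, ψ (φ b) = b) (hφψ : ∀ a, φ (ψ a) = a) : Match α β where
  s b := .inl (φ b)
  i := ψ
  h1 a := by rw [hφψ]
  h2 b a h := by cases h; exact hψφ b
  h3 b b' h := by cases h

/-- Composite of the `s`-function of two matches. -/
def compS {α β γ : Type} (m : Match α β) (m' : Match β γ) (c : γ) : α ⊕ γ :=
  match m'.s c with
  | .inl b => match m.s b with
    | .inl a => .inl a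
    | .inr b' => .inr (m'.i b')
  | .inr c' => .inr c'

theorem compS_eq1 {α β γ : Type} (m : Match α β) (m' : Match β γ) {c : γ} {b : β} {a : α}
    (hc : m'.s c = .inl b) (hb : m.s b = .inl a) : compS m m' c = .inl a := by
  simp [compS, hc, hb]

theorem compS_eq2 {α β γ : Type} (m : Match α β) (m' : Match β γ) {c : γ} {b b' : β}
    (hc : m'.s c = .inl b) (hb : m.s b = .inr b') : compS m m' c = .inr (m'.i b') := by
  simp [compS, hc, hb]

theorem compS_eq3 {α β γ : Type} (m : Match α β) (m' : Match β γ) {c c' : γ}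
    (hc : m'.s c = .inr c') : compS m m' c = .inr c' := by
  simp [compS, hc]

def Match.comp {α β γ : Type} (m : Match α β) (m' : Match β γ) : Match α γ where
  i := fun a => m'.i (m.i a)
  s := compS m m'
  h1 a := by rw [compS_eq1 m m' (m'.h1 _) (m.h1 _)]
  h2 c a h := by
    rcases hc : m'.s c with b | c'
    · rcases hb : m.s b with a' | b'
      · rw [compS_eq1 m m' hc hb] at h
        cases h
        rw [m.h2 _ _ hb, m'.h2 _ _ hc]
      · rw [compS_eq2 m m' hc hb] at h; cases h
    · rw [compS_eq3 m m' hc] at h; cases h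
  h3 c c' h := by
    rcases hc : m'.s c with b | c₀
    · rcases hb : m.s b with a' | b'
      · rw [compS_eq1 m m' hc hb] at h; cases h
      · rw [compS_eq2 m m' hc hb] at h
        cases h
        obtain ⟨hne, hb'⟩ := m.h3 _ _ hb
        have hcb : m'.i b = c := m'.h2 _ _ hc
        refine ⟨fun hcc => hne (m'.i_inj (hcc.trans hcb.symm)), ?_⟩
        rw [compS_eq2 m m' (m'.h1 _) hb', hcb]
    · rw [compS_eq3 m m' hc] at h
      cases h
      obtain ⟨hne, hc'⟩ := m'.h3 _ _ hc
      exact ⟨hne, compS_eq3 m m' hc'⟩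

def Match.tens {α β γ δ : Type} (m : Match α β) (m' : Match γ δ) :
    Match (α ⊕ γ) (β ⊕ δ) where
  i := Sum.map m.i m'.i
  s := fun b => match b with
    | .inl b₁ => (m.s b₁).map Sum.inl Sum.inl
    | .inr b₂ => (m'.s b₂).map Sum.inr Sum.inr
  h1 a := by
    rcases a with a | a <;>
      simp [m.h1, m'.h1, Sum.map_inl, Sum.map_inr]
  h2 b a h := by
    rcases b with b | b <;> dsimp only at h ⊢
    · rcases hb : m.s b with a' | b' <;> rw [hb] at h <;>
        simp only [Sum.map_inl, Sum.map_inr] at h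
      · rcases a with a | a <;> simp only [Sum.inl.injEq, reduceCtorEq] at h
        cases h
        simp [Sum.map_inl, m.h2 _ _ hb]
      · exact absurd h (by simp)
    · rcases hb : m'.s b with a' | b' <;> rw [hb] at h <;>
        simp only [Sum.map_inl, Sum.map_inr] at h
      · rcases a with a | a <;> simp only [Sum.inr.injEq, Sum.inl.injEq, reduceCtorEq] at h
        cases h
        simp [Sum.map_inr, m'.h2 _ _ hb]
      · exact absurd h (by simp)
  h3 b b' h := by
    rcases b with b | b <;> dsimp only at h ⊢
    · rcases hb : m.s b with a' | b₀ <;> rw [hb] at h <;>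
        simp only [Sum.map_inl, Sum.map_inr, reduceCtorEq, Sum.inr.injEq] at h
      cases h
      obtain ⟨hne, hb'⟩ := m.h3 _ _ hb
      refine ⟨by simpa using hne, ?_⟩
      dsimp only
      rw [hb']
      rfl
    · rcases hb : m'.s b with a' | b₀ <;> rw [hb] at h <;>
        simp only [Sum.map_inl, Sum.map_inr, reduceCtorEq, Sum.inr.injEq] at h
      cases h
      obtain ⟨hne, hb'⟩ := m'.h3 _ _ hb
      refine ⟨by simpa using hne, ?_⟩
      dsimp only
      rw [hb']
      rfl

def Match.rx : Match Empty Bool where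
  s b := .inr (!b)
  i := Empty.elim
  h1 a := a.elim
  h2 b a h := a.elim
  h3 b b' h := by
    cases h
    exact ⟨by cases b <;> simp, by cases b <;> rfl⟩



def Msem : ∀ {A B : Fm V}, Ar V A B → Match (Occ A) (Occ B)
  | _, _, .id _ => .ofBij (fun o => o) (fun o => o) (fun _ => rfl) (fun _ => rfl)
  | _, _, .comp g f => (Msem f).comp (Msem g)
  | _, _, .tens f g => (Msem f).tens (Msem g)
  | _, _, .bto _ _ _ => .ofBij
      (fun o => match o with
        | .inl (.inl a) => .inl a
        | .inl (.inr b) => .inr (.inl b)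
        | .inr c => .inr (.inr c))
      (fun o => match o with
        | .inl a => .inl (.inl a)
        | .inr (.inl b) => .inl (.inr b)
        | .inr (.inr c) => .inr c)
      (by rintro ((a | b) | c) <;> rfl) (by rintro (a | (b | c)) <;> rfl)
  | _, _, .bfrom _ _ _ => .ofBij
      (fun o => match o with
        | .inl a => .inl (.inl a)
        | .inr (.inl b) => .inl (.inr b)
        | .inr (.inr c) => .inr c)
      (fun o => match o with
        | .inl (.inl a) => .inl a
        | .inl (.inr b) => .inr (.inl b)
        | .inr c => .inr (.inr c))
      (by rintro (a | (b | c)) <;> rfl) (by rintro ((a | b) | c) <;> rfl)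
  | _, _, .dto _ => .ofBij Sum.inl (Sum.elim (fun o => o) Empty.elim)
      (fun _ => rfl) (by rintro (a | e); exacts [rfl, Empty.elim e])
  | _, _, .dfrom _ => .ofBij (Sum.elim (fun o => o) Empty.elim) Sum.inl
      (by rintro (a | e); exacts [rfl, Empty.elim e]) (fun _ => rfl)
  | _, _, .sto _ => .ofBij Sum.inr (Sum.elim Empty.elim (fun o => o))
      (fun _ => rfl) (by rintro (e | a); exacts [Empty.elim e, rfl])
  | _, _, .sfrom _ => .ofBij (Sum.elim Empty.elim (fun o => o)) Sum.inr
      (by rintro (e | a); exacts [Empty.elim e, rfl]) (fun _ => rfl)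
  | _, _, .r _ => Match.rx

theorem R_ofBij_relabel {α β : Type} (φ : β → α) (ψ : α → β)
    (hψφ : ∀ b, ψ (φ b) = b) (hφψ : ∀ a, φ (ψ a) = a) :
    relabel φ = R (Match.ofBij φ ψ hψφ hφψ) := by
  funext u v
  apply propext
  constructor
  · rintro (⟨o, rfl, rfl⟩ | ⟨o, rfl, rfl⟩)
    · exact Or.inl ⟨φ o, rfl, by simp [Match.ofBij, hψφ]⟩
    · exact Or.inr (Or.inl ⟨φ o, rfl, by simp [Match.ofBij, hψφ]⟩)
  · rintro (⟨a, rfl, rfl⟩ | ⟨a, rfl, rfl⟩ | ⟨b, b', hb, rfl, rfl⟩)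
    · refine Or.inl ⟨ψ a, ?_, rfl⟩
      rw [hφψ]
    · refine Or.inr ⟨ψ a, rfl, ?_⟩
      rw [hφψ]
    · exact absurd hb (by simp [Match.ofBij])
  
theorem R_ofBij_corelabel {α β : Type} (φ : β → α) (ψ : α → β)
    (hψφ : ∀ b, ψ (φ b) = b) (hφψ : ∀ a, φ (ψ a) = a) :
    corelabel ψ = R (Match.ofBij φ ψ hψφ hφψ) := by
  funext u v
  apply propext
  constructor
  · rintro (⟨o, rfl, rfl⟩ | ⟨o, rfl, rfl⟩)
    · exact Or.inl ⟨o, rfl, rfl⟩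
    · exact Or.inr (Or.inl ⟨o, rfl, rfl⟩)
  · rintro (⟨a, rfl, rfl⟩ | ⟨a, rfl, rfl⟩ | ⟨b, b', hb, rfl, rfl⟩)
    · exact Or.inl ⟨a, rfl, rfl⟩
    · exact Or.inr ⟨a, rfl, rfl⟩
    · exact absurd hb (by simp [Match.ofBij])

theorem R_tens {α β γ δ : Type} (m : Match α β) (m' : Match γ δ) :
    tensRel (R m) (R m') = R (m.tens m') := by
  funext u v
  apply propext
  constructor
  · rintro (⟨x, y, hxy, rfl, rfl⟩ | ⟨x, y, hxy, rfl, rfl⟩)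
    · rcases hxy with ⟨a, rfl, rfl⟩ | ⟨a, rfl, rfl⟩ | ⟨b, b', hb, rfl, rfl⟩
      · exact Or.inl ⟨Sum.inl a, rfl, rfl⟩
      · exact Or.inr (Or.inl ⟨Sum.inl a, rfl, rfl⟩)
      · exact Or.inr (Or.inr ⟨Sum.inl b, Sum.inl b', by simp [Match.tens, hb], rfl, rfl⟩)
    · rcases hxy with ⟨a, rfl, rfl⟩ | ⟨a, rfl, rfl⟩ | ⟨b, b', hb, rfl, rfl⟩
      · exact Or.inl ⟨Sum.inr a, rfl, rfl⟩
      · exact Or.inr (Or.inl ⟨Sum.inr a, rfl, rfl⟩)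
      · exact Or.inr (Or.inr ⟨Sum.inr b, Sum.inr b', by simp [Match.tens, hb], rfl, rfl⟩)
  · rintro (⟨a, rfl, rfl⟩ | ⟨a, rfl, rfl⟩ | ⟨b, b', hb, rfl, rfl⟩)
    · rcases a with a | a
      · exact Or.inl ⟨Sum.inl a, Sum.inr (m.i a), Or.inl ⟨a, rfl, rfl⟩, rfl, rfl⟩
      · exact Or.inr ⟨Sum.inl a, Sum.inr (m'.i a), Or.inl ⟨a, rfl, rfl⟩, rfl, rfl⟩
    · rcases a with a | a
      · exact Or.inl ⟨Sum.inr (m.i a), Sum.inl a, Or.inr (Or.inl ⟨a, rfl, rfl⟩), rfl, rfl⟩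
      · exact Or.inr ⟨Sum.inr (m'.i a), Sum.inl a, Or.inr (Or.inl ⟨a, rfl, rfl⟩), rfl, rfl⟩
    · rcases b with b | b
      · rcases hb' : m.s b with a0 | b0 <;>
          simp only [Match.tens, hb', Sum.map_inl, Sum.map_inr] at hb
        · exact absurd hb (by simp)
        · rcases b' with b' | b' <;> simp only [Sum.inr.injEq, Sum.inl.injEq, reduceCtorEq] at hb
          cases hb
          exact Or.inl ⟨Sum.inr b, Sum.inr b0, Or.inr (Or.inr ⟨b, b0, hb', rfl, rfl⟩), rfl, rfl⟩
      · rcases hb' : m'.s b with a0 | b0 <;>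
          simp only [Match.tens, hb', Sum.map_inl, Sum.map_inr] at hb
        · exact absurd hb (by simp)
        · rcases b' with b' | b' <;> simp only [Sum.inr.injEq, Sum.inl.injEq, reduceCtorEq] at hb
          cases hb
          exact Or.inr ⟨Sum.inr b, Sum.inr b0, Or.inr (Or.inr ⟨b, b0, hb', rfl, rfl⟩), rfl, rfl⟩

/-! ### Composition of Brauerian diagrams of matches -/

section RComp

variable {α β γ : Type} (m : Match α β) (m' : Match β γ)

/-- The set of outer endpoints of the connected component of a vertex in the
composite graph. -/
def ends : α ⊕ (β ⊕ γ) → α ⊕ γ → Prop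
  | .inl a, w => w = .inl a ∨ w = .inr (m'.i (m.i a))
  | .inr (.inl b), w =>
      match m.s b with
      | .inl a => w = .inl a ∨ w = .inr (m'.i b)
      | .inr b' => w = .inr (m'.i b) ∨ w = .inr (m'.i b')
  | .inr (.inr c), w =>
      match m'.s c with
      | .inl b =>
        (match m.s b with
         | .inl a => w = .inl a ∨ w = .inr (m'.i b)
         | .inr b' => w = .inr (m'.i b) ∨ w = .inr (m'.i b'))
      | .inr c' => w = .inr c ∨ w = .inr c'

/-- The step relation used in `compRel`. -/
def stepRel : α ⊕ (β ⊕ γ) → α ⊕ (β ⊕ γ) → Prop := fun s t =>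
  (∃ x y, R m x y ∧ s = Sum.map (fun a => a) Sum.inl x ∧
                    t = Sum.map (fun a => a) Sum.inl y) ∨
  (∃ x y, R m' x y ∧ s = Sum.inr x ∧ t = Sum.inr y)

theorem step_ends {u v : α ⊕ (β ⊕ γ)} (h : stepRel m m' u v) :
    ends m m' u = ends m m' v := by
  funext w
  apply propext
  rcases h with ⟨x, y, hxy, rfl, rfl⟩ | ⟨x, y, hxy, rfl, rfl⟩
  · rcases hxy with ⟨a, rfl, rfl⟩ | ⟨a, rfl, rfl⟩ | ⟨b, b', hb, rfl, rfl⟩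
    · simp only [Sum.map_inl, Sum.map_inr, ends, m.h1]
    · simp only [Sum.map_inl, Sum.map_inr, ends, m.h1]
    · obtain ⟨hne, hb'⟩ := m.h3 _ _ hb
      simp only [Sum.map_inl, Sum.map_inr, ends, hb, hb']
      exact or_comm
  · rcases hxy with ⟨b, rfl, rfl⟩ | ⟨b, rfl, rfl⟩ | ⟨c, c', hc, rfl, rfl⟩
    · simp only [ends, m'.h1]
    · simp only [ends, m'.h1]
    · obtain ⟨hne, hc'⟩ := m'.h3 _ _ hc
      simp only [ends, hc, hc']
      exact or_comm

theorem ends_self (w : α ⊕ γ) : ends m m' (Sum.map (fun a => a) Sum.inr w) w := by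
  rcases w with a | c
  · exact Or.inl rfl
  · show ends m m' (.inr (.inr c)) (.inr c)
    rcases hc : m'.s c with b | c'
    · rcases hb : m.s b with a | b'
      · simp only [ends, hc, hb]
        exact Or.inr (by rw [m'.h2 _ _ hc])
      · simp only [ends, hc, hb]
        exact Or.inl (by rw [m'.h2 _ _ hc])
    · simp [ends, hc]

theorem ends_outer {u v : α ⊕ γ} (hne : u ≠ v)
    (he : ends m m' (Sum.map (fun a => a) Sum.inr u) v) : R (m.comp m') u v := by
  rcases u with a | c
  · rcases he with rfl | rfl
    · exact absurd rfl hne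
    · exact Or.inl ⟨a, rfl, rfl⟩
  · replace he : ends m m' (.inr (.inr c)) v := he
    rcases hc : m'.s c with b | c'
    · rcases hb : m.s b with a | b'
      · simp only [ends, hc, hb] at he
        have hic : m'.i b = c := m'.h2 _ _ hc
        rcases he with rfl | rfl
        · exact Or.inr (Or.inl ⟨a, rfl, by rw [show (m.comp m').i = fun a => m'.i (m.i a) from rfl]; dsimp only; rw [m.h2 _ _ hb, hic]⟩)
        · exact absurd (by rw [hic]) hne
      · simp only [ends, hc, hb] at he
        have hic : m'.i b = c := m'.h2 _ _ hc
        rcases he with rfl | rfl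
        · exact absurd (by rw [hic]) hne
        · exact Or.inr (Or.inr ⟨c, m'.i b', compS_eq2 m m' hc hb, rfl, rfl⟩)
    · simp only [ends, hc] at he
      rcases he with rfl | rfl
      · exact absurd rfl hne
      · exact Or.inr (Or.inr ⟨c, c', compS_eq3 m m' hc, rfl, rfl⟩)

theorem R_comp : compRel (R m) (R m') = R (m.comp m') := by
  funext u v
  apply propext
  constructor
  · rintro ⟨hne, hpath⟩
    have key : ∀ {x y : α ⊕ (β ⊕ γ)}, Relation.ReflTransGen (stepRel m m') x y →
        ends m m' x = ends m m' y := by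
      intro x y h
      induction h with
      | refl => rfl
      | tail _ hstep ih => exact ih.trans (step_ends m m' hstep)
    have h2 := key hpath
    have hv := ends_self m m' v
    rw [← h2] at hv
    exact ends_outer m m' hne hv
  · intro hr
    rcases hr with ⟨a, rfl, rfl⟩ | ⟨a, rfl, rfl⟩ | ⟨c, c', hb, rfl, rfl⟩
    · refine ⟨by simp, ?_⟩
      refine Relation.ReflTransGen.head
        (Or.inl ⟨.inl a, .inr (m.i a), Or.inl ⟨a, rfl, rfl⟩, rfl, rfl⟩) ?_
      refine Relation.ReflTransGen.head
        (Or.inr ⟨.inl (m.i a), .inr (m'.i (m.i a)), Or.inl ⟨m.i a, rfl, rfl⟩, rfl, rfl⟩) ?_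
      exact Relation.ReflTransGen.refl
    · refine ⟨by simp, ?_⟩
      refine Relation.ReflTransGen.head
        (Or.inr ⟨.inr (m'.i (m.i a)), .inl (m.i a), Or.inr (Or.inl ⟨m.i a, rfl, rfl⟩), rfl, rfl⟩) ?_
      refine Relation.ReflTransGen.head
        (Or.inl ⟨.inr (m.i a), .inl a, Or.inr (Or.inl ⟨a, rfl, rfl⟩), rfl, rfl⟩) ?_
      exact Relation.ReflTransGen.refl
    · obtain ⟨hne, _⟩ := (m.comp m').h3 _ _ hb
      refine ⟨fun h => hne (Sum.inr.inj h).symm, ?_⟩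
      replace hb : compS m m' c = Sum.inr c' := hb
      rcases hc : m'.s c with b | c₀
      · rcases hbb : m.s b with a | b'
        · rw [compS_eq1 m m' hc hbb] at hb; cases hb
        · rw [compS_eq2 m m' hc hbb] at hb
          cases hb
          have hic : m'.i b = c := m'.h2 _ _ hc
          subst hic
          refine Relation.ReflTransGen.head
            (Or.inr ⟨.inr (m'.i b), .inl b, Or.inr (Or.inl ⟨b, rfl, rfl⟩), rfl, rfl⟩) ?_
          refine Relation.ReflTransGen.head
            (Or.inl ⟨.inr b, .inr b', Or.inr (Or.inr ⟨b, b', hbb, rfl, rfl⟩), rfl, rfl⟩) ?_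
          refine Relation.ReflTransGen.head
            (Or.inr ⟨.inl b', .inr (m'.i b'), Or.inl ⟨b', rfl, rfl⟩, rfl, rfl⟩) ?_
          exact Relation.ReflTransGen.refl
      · rw [compS_eq3 m m' hc] at hb
        cases hb
        refine Relation.ReflTransGen.head
          (Or.inr ⟨.inr c, .inr c', Or.inr (Or.inr ⟨c, c', hc, rfl, rfl⟩), rfl, rfl⟩) ?_
        exact Relation.ReflTransGen.refl

end RComp

/-- The diagram of an arrow term is the diagram of its match semantics. -/
theorem grel_eq : ∀ {A B : Fm V} (f : Ar V A B), GRel f = R (Msem f)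
  | _, _, .id A => R_ofBij_relabel _ _ _ _
  | _, _, .comp g f => by
      show compRel (GRel f) (GRel g) = _
      rw [grel_eq f, grel_eq g]
      exact R_comp _ _
  | _, _, .tens f g => by
      show tensRel (GRel f) (GRel g) = _
      rw [grel_eq f, grel_eq g]
      exact R_tens _ _
  | _, _, .bto _ _ _ => R_ofBij_relabel _ _ _ _
  | _, _, .bfrom _ _ _ => R_ofBij_relabel _ _ _ _
  | _, _, .dto _ => R_ofBij_relabel _ _ _ _
  | _, _, .dfrom _ => R_ofBij_corelabel _ _ _ _
  | _, _, .sto _ => R_ofBij_relabel _ _ _ _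
  | _, _, .sfrom _ => R_ofBij_corelabel _ _ _ _
  | _, _, .r x => by
      funext u v
      apply propext
      constructor
      · rintro (⟨rfl, rfl⟩ | ⟨rfl, rfl⟩)
        · exact Or.inr (Or.inr ⟨false, true, rfl, rfl, rfl⟩)
        · exact Or.inr (Or.inr ⟨true, false, rfl, rfl, rfl⟩)
      · rintro (⟨a, rfl, rfl⟩ | ⟨a, rfl, rfl⟩ | ⟨b, b', hbb, rfl, rfl⟩)
        · exact Empty.elim a
        · exact Empty.elim a
        · cases hbb
          cases b
          · exact Or.inl ⟨rfl, rfl⟩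
          · exact Or.inr ⟨rfl, rfl⟩

/-- `R` is injective. -/
theorem R_inj {α β : Type} {m m' : Match α β} (h : R m = R m') : m = m' := by
  have hi : ∀ a, m.i a = m'.i a := by
    intro a
    have h1 : R m (Sum.inl a) (Sum.inr (m.i a)) := Or.inl ⟨a, rfl, rfl⟩
    rw [h] at h1
    rcases h1 with ⟨a', ha, hv⟩ | ⟨a', ha, hv⟩ | ⟨b, b', _, hu, _⟩
    · cases ha; exact Sum.inr.inj hv
    · cases ha
    · cases hu
  have hs : ∀ b, m.s b = m'.s b := by
    intro b
    rcases hb : m.s b with a | b'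
    · have hib : m.i a = b := m.h2 _ _ hb
      have hib' : m'.i a = b := by rw [← hi a, hib]
      rw [← hib', m'.h1]
    · have h1 : R m' (Sum.inr b) (Sum.inr b') := by
        rw [← h]; exact Or.inr (Or.inr ⟨b, b', hb, rfl, rfl⟩)
      rcases h1 with ⟨a', ha, hv⟩ | ⟨a', hv, hu⟩ | ⟨b₀, b₀', hc, hu, hv⟩
      · cases ha
      · cases hv
      · cases hu; cases hv
        rw [hc]
  exact Match.ext' (funext hs) (funext hi)

/-! ### Soundness of the equations for match semantics -/

theorem Match.comp_assoc' {α β γ δ : Type} (m₁ : Match α β) (m₂ : Match β γ) (m₃ : Match γ δ) :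
    (m₁.comp m₂).comp m₃ = m₁.comp (m₂.comp m₃) := by
  apply Match.ext'
  · funext d
    show compS (m₁.comp m₂) m₃ d = compS m₁ (m₂.comp m₃) d
    rcases h3 : m₃.s d with c | d'
    · rcases h2 : m₂.s c with b | c'
      · rcases h1 : m₁.s b with a | b' <;>
          simp [compS, Match.comp, h3, h2, h1]
      · simp [compS, Match.comp, h3, h2]
    · simp [compS, Match.comp, h3]
  · rfl

def idM (α : Type) : Match α α := Match.ofBij (fun o => o) (fun o => o) (fun _ => rfl) (fun _ => rfl)

theorem Match.comp_idL {α β : Type} (m : Match α β) : (idM α).comp m = m := by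
  apply Match.ext'
  · funext c
    show compS (idM α) m c = m.s c
    rcases h : m.s c with b | c' <;> simp [compS, idM, Match.ofBij, h]
  · rfl

theorem Match.comp_idR {α β : Type} (m : Match α β) : m.comp (idM β) = m := by
  apply Match.ext'
  · funext c
    show compS m (idM β) c = m.s c
    rcases h : m.s c with b | c' <;> simp [compS, idM, Match.ofBij, h]
  · rfl

theorem Match.interchange {α₁ β₁ γ₁ α₂ β₂ γ₂ : Type}
    (f₁ : Match α₁ β₁) (g₁ : Match β₁ γ₁) (f₂ : Match α₂ β₂) (g₂ : Match β₂ γ₂) :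
    (f₁.comp g₁).tens (f₂.comp g₂) = (f₁.tens f₂).comp (g₁.tens g₂) := by
  apply Match.ext'
  · funext c
    rcases c with c | c
    · show Sum.map Sum.inl Sum.inl (compS f₁ g₁ c) = compS (f₁.tens f₂) (g₁.tens g₂) (Sum.inl c)
      rcases h2 : g₁.s c with b | c'
      · rcases h1 : f₁.s b with a | b' <;>
          simp [compS, Match.tens, Match.comp, h2, h1]
      · simp [compS, Match.tens, Match.comp, h2]
    · show Sum.map Sum.inr Sum.inr (compS f₂ g₂ c) = compS (f₁.tens f₂) (g₁.tens g₂) (Sum.inr c)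
      rcases h2 : g₂.s c with b | c'
      · rcases h1 : f₂.s b with a | b' <;>
          simp [compS, Match.tens, Match.comp, h2, h1]
      · simp [compS, Match.tens, Match.comp, h2]
  · funext a
    rcases a with a | a <;> rfl

theorem msem_sound {A B : Fm V} {f g : Ar V A B} (h : Eqv f g) : Msem f = Msem g := by
  induction h with
  | refl f => rfl
  | symm _ ih => exact ih.symm
  | trans _ _ ih ih' => exact ih.trans ih'
  | congr_comp _ _ ihg ihf => show Match.comp _ _ = Match.comp _ _; rw [ihf, ihg]
  | congr_tens _ _ ihf ihg => show Match.tens _ _ = Match.tens _ _; rw [ihf, ihg]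
  | id_comp f => exact Match.comp_idR (Msem f)
  | comp_id f => exact Match.comp_idL (Msem f)
  | comp_assoc h g f => exact (Match.comp_assoc' (Msem f) (Msem g) (Msem h)).symm
  | tens_id A B =>
      apply Match.ext'
      · funext c; rcases c with c | c <;> rfl
      · funext a; rcases a with a | a <;> rfl
  | tens_comp g1 f1 g2 f2 => exact Match.interchange _ _ _ _
  | nat_b f g h =>
      apply Match.ext'
      · funext o
        show compS (Msem (Ar.bto _ _ _)) (Msem ((f.tens g).tens h)) o =
          compS (Msem (f.tens (g.tens h))) (Msem (Ar.bto _ _ _)) o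
        rcases o with (a | b) | c
        · rcases ha : (Msem f).s a with x | y <;>
            simp [compS, Msem, Match.tens, Match.comp, Match.ofBij, ha] <;> rfl
        · rcases hb : (Msem g).s b with x | y <;>
            simp [compS, Msem, Match.tens, Match.comp, Match.ofBij, hb] <;> rfl
        · rcases hc : (Msem h).s c with x | y <;>
            simp [compS, Msem, Match.tens, Match.comp, Match.ofBij, hc] <;> rfl
      · funext a
        rcases a with a | (b | c) <;> rfl
  | nat_d f =>
      apply Match.ext'
      · funext o
        show compS (Msem (Ar.dto _)) (Msem f) o =
          compS (Msem (f.tens (Ar.id .top))) (Msem (Ar.dto _)) o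
        rcases ho : (Msem f).s o with x | y <;>
          simp [compS, Msem, Match.tens, Match.comp, Match.ofBij, ho] <;> rfl
      · funext a; rcases a with a | e
        · rfl
        · exact Empty.elim e
  | nat_s f =>
      apply Match.ext'
      · funext o
        show compS (Msem (Ar.sto _)) (Msem f) o =
          compS (Msem ((Ar.id .top).tens f)) (Msem (Ar.sto _)) o
        rcases ho : (Msem f).s o with x | y <;>
          simp [compS, Msem, Match.tens, Match.comp, Match.ofBij, ho] <;> rfl
      · funext a; rcases a with e | a
        · exact Empty.elim e
        · rfl
  | bb1 A B C =>
      apply Match.ext'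
      · funext o; rcases o with a | (b | c) <;> rfl
      · funext a; rcases a with a | (b | c) <;> rfl
  | bb2 A B C =>
      apply Match.ext'
      · funext o; rcases o with (a | b) | c <;> rfl
      · funext a; rcases a with (a | b) | c <;> rfl
  | dd1 A =>
      apply Match.ext'
      · funext o; rcases o with a | e
        · rfl
        · exact Empty.elim e
      · funext a; rcases a with a | e
        · rfl
        · exact Empty.elim e
  | dd2 A =>
      apply Match.ext'
      · funext o; rfl
      · funext a; rfl
  | ss1 A =>
      apply Match.ext'
      · funext o; rcases o with e | a
        · exact Empty.elim e
        · rfl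
      · funext a; rcases a with e | a
        · exact Empty.elim e
        · rfl
  | ss2 A =>
      apply Match.ext'
      · funext o; rfl
      · funext a; rfl
  | pent A B C D =>
      apply Match.ext'
      · funext o; rcases o with ((a | b) | c) | d <;> rfl
      · funext a; rcases a with a | (b | (c | d)) <;> rfl
  | bds A C =>
      apply Match.ext'
      · funext o; rcases o with (a | e) | c
        · rfl
        · exact Empty.elim e
        · rfl
      · funext a; rcases a with a | (e | c)
        · rfl
        · exact Empty.elim e
        · rfl

/-! ### Normal forms: insertion words -/

def L : Fm V → List (V × V)
  | .rel x y => [(x, y)]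
  | .top => []
  | .and A B => L A ++ L B

def objL : List (V × V) → Fm V
  | [] => .top
  | p :: l => .and (.rel p.1 p.2) (objL l)

attribute [reducible] L objL

/-- A word recording, for each atom of the target, whether it comes from the
source (`old`) or is created by an `r` arrow (`new`). -/
inductive Word (V : Type) : List (V × V) → List (V × V) → Type
  | nil : Word V [] []
  | old (p : V × V) {l₁ l₂ : List (V × V)} (w : Word V l₁ l₂) : Word V (p :: l₁) (p :: l₂)
  | new (x : V) (p : V × V) (h : p = (x, x)) {l₁ l₂ : List (V × V)} (w : Word V l₁ l₂) :
      Word V l₁ (p :: l₂)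

def ins : ∀ {l₁ l₂ : List (V × V)}, Word V l₁ l₂ → Ar V (objL l₁) (objL l₂)
  | _, _, .nil => .id .top
  | _, _, .old p w => (Ar.id (.rel p.1 p.2)).tens (ins w)
  | _, _, .new x _ rfl w => ((Ar.r x).tens (ins w)).comp (Ar.sfrom _)

def merge : ∀ (l₁ l₂ : List (V × V)), CT V ((objL l₁).and (objL l₂)) (objL (l₁ ++ l₂))
  | [], _ => .sto _
  | p :: l₁, l₂ => .comp (.tens (.id (.rel p.1 p.2)) (merge l₁ l₂)) (.bfrom _ _ _)

def can : ∀ (A : Fm V), CT V A (objL (L A))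
  | .rel _ _ => .dfrom _
  | .top => .id _
  | .and A B => .comp (merge (L A) (L B)) (.tens (can A) (can B))

def NFt {A B : Fm V} (w : Word V (L A) (L B)) : Ar V A B :=
  (ι (cinv (can B))).comp ((ins w).comp (ι (can A)))

def allOld : ∀ (l : List (V × V)), Word V l l
  | [] => .nil
  | p :: l => .old p (allOld l)

theorem ins_allOld (l : List (V × V)) : Q.mk (ins (allOld l)) = Q.mk (Ar.id (objL l)) := by
  induction l with
  | nil => rfl
  | cons p l ih =>
      show Q.mk ((Ar.id (.rel p.1 p.2)).tens (ins (allOld l))) = _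
      rw [Q.mk_tens, ih, Q.tens_id]

def wcomp : ∀ {l₁ l₂ l₃ : List (V × V)}, Word V l₂ l₃ → Word V l₁ l₂ → Word V l₁ l₃
  | _, _, _, .new x p h w₂, w₁ => .new x p h (wcomp w₂ w₁)
  | _, _, _, .old p w₂, .old _ w₁ => .old p (wcomp w₂ w₁)
  | _, _, _, .old _ w₂, .new x p h w₁ => .new x p h (wcomp w₂ w₁)
  | _, _, _, .nil, w₁ => w₁

def wapp : ∀ {l₁ l₂ l₃ l₄ : List (V × V)},
    Word V l₁ l₂ → Word V l₃ l₄ → Word V (l₁ ++ l₃) (l₂ ++ l₄)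
  | _, _, _, _, .nil, w => w
  | _, _, _, _, .old p w, w' => .old p (wapp w w')
  | _, _, _, _, .new x p h w, w' => .new x p h (wapp w w')

/-- Helper lemmas for tensor-identity distribution. -/
theorem Q.tens_id_comp {E : Fm V} {A B C : Fm V} (x : Q V B C) (y : Q V A B) :
    Q.mk (Ar.id E) ⧆ (x ⬝ y) = (Q.mk (Ar.id E) ⧆ x) ⬝ (Q.mk (Ar.id E) ⧆ y) := by
  conv_lhs => rw [← Q.id_comp (Q.mk (Ar.id E))]
  rw [Q.tens_comp]

theorem Q.tens_comp_id {E : Fm V} {A B C : Fm V} (x : Q V B C) (y : Q V A B) :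
    (x ⬝ y) ⧆ Q.mk (Ar.id E) = (x ⧆ Q.mk (Ar.id E)) ⬝ (y ⧆ Q.mk (Ar.id E)) := by
  conv_lhs => rw [← Q.id_comp (Q.mk (Ar.id E))]
  rw [Q.tens_comp]

theorem wcomp_eqv : ∀ {l₁ l₂ l₃ : List (V × V)} (w₂ : Word V l₂ l₃) (w₁ : Word V l₁ l₂),
    Q.mk ((ins w₂).comp (ins w₁)) = Q.mk (ins (wcomp w₂ w₁))
  | _, _, _, .new x p h w₂, w₁ => by
      cases h
      show Q.mk ((((Ar.r x).tens (ins w₂)).comp (Ar.sfrom _)).comp (ins w₁)) =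
        Q.mk (((Ar.r x).tens (ins (wcomp w₂ w₁))).comp (Ar.sfrom _))
      simp only [Q.mk_comp, Q.mk_tens]
      calc ((Q.mk (Ar.r x) ⧆ Q.mk (ins w₂)) ⬝ Q.mk (Ar.sfrom _)) ⬝ Q.mk (ins w₁)
          = (Q.mk (Ar.r x) ⧆ Q.mk (ins w₂)) ⬝ (Q.mk (Ar.sfrom _) ⬝ Q.mk (ins w₁)) := Q.assoc _ _ _
        _ = (Q.mk (Ar.r x) ⧆ Q.mk (ins w₂)) ⬝
            ((Q.mk (Ar.id .top) ⧆ Q.mk (ins w₁)) ⬝ Q.mk (Ar.sfrom _)) := by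
              rw [Q.nat_s' (Q.mk (ins w₁))]
        _ = ((Q.mk (Ar.r x) ⧆ Q.mk (ins w₂)) ⬝ (Q.mk (Ar.id .top) ⧆ Q.mk (ins w₁))) ⬝
            Q.mk (Ar.sfrom _) := (Q.assoc _ _ _).symm
        _ = ((Q.mk (Ar.r x) ⬝ Q.mk (Ar.id .top)) ⧆ (Q.mk (ins w₂) ⬝ Q.mk (ins w₁))) ⬝
            Q.mk (Ar.sfrom _) := by rw [Q.tens_comp]
        _ = (Q.mk (Ar.r x) ⧆ Q.mk (ins (wcomp w₂ w₁))) ⬝ Q.mk (Ar.sfrom _) := by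
              rw [Q.comp_id, ← Q.mk_comp, wcomp_eqv w₂ w₁]
  | _, _, _, .old p w₂, .old _ w₁ => by
      show Q.mk (((Ar.id (.rel p.1 p.2)).tens (ins w₂)).comp
        ((Ar.id (.rel p.1 p.2)).tens (ins w₁))) = Q.mk ((Ar.id _).tens (ins (wcomp w₂ w₁)))
      simp only [Q.mk_comp, Q.mk_tens]
      rw [← Q.tens_comp, Q.id_comp, ← Q.mk_comp, wcomp_eqv w₂ w₁]
  | _, _, _, .old _ w₂, .new x p h w₁ => by
      cases h
      show Q.mk (((Ar.id (.rel x x)).tens (ins w₂)).comp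
          (((Ar.r x).tens (ins w₁)).comp (Ar.sfrom _))) =
        Q.mk (((Ar.r x).tens (ins (wcomp w₂ w₁))).comp (Ar.sfrom _))
      simp only [Q.mk_comp, Q.mk_tens]
      rw [← Q.assoc, ← Q.tens_comp, Q.id_comp, ← Q.mk_comp, wcomp_eqv w₂ w₁]
  | _, _, _, .nil, w₁ => by
      show Q.mk ((Ar.id .top).comp (ins w₁)) = Q.mk (ins w₁)
      rw [Q.mk_comp, Q.id_comp]

theorem sfrom_coh (X Y : Fm V) :
    Q.mk (Ar.bfrom .top X Y) ⬝ (Q.mk (Ar.sfrom X) ⧆ Q.mk (Ar.id Y)) =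
      Q.mk (Ar.sfrom (X.and Y)) :=
  coherence (V := V)
    (CT.comp (CT.bfrom .top X Y) (CT.tens (CT.sfrom X) (CT.id Y))) (CT.sfrom (X.and Y))

theorem mergeins : ∀ {l₁ l₂ l₃ l₄ : List (V × V)} (w : Word V l₁ l₂) (w' : Word V l₃ l₄),
    Q.mk (ι (merge l₂ l₄)) ⬝ (Q.mk (ins w) ⧆ Q.mk (ins w')) =
      Q.mk (ins (wapp w w')) ⬝ Q.mk (ι (merge l₁ l₃))
  | _, _, l₃, l₄, .nil, w' => by
      show Q.mk (Ar.sto (objL l₄)) ⬝ (Q.mk (Ar.id .top) ⧆ Q.mk (ins w')) =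
        Q.mk (ins w') ⬝ Q.mk (Ar.sto (objL l₃))
      rw [← Q.nat_s0 (Q.mk (ins w'))]
  | _, _, l₃, l₄, .old p (l₁ := a) (l₂ := b) w, w' => by
      show Q.mk (((Ar.id (.rel p.1 p.2)).tens (ι (merge b l₄))).comp (Ar.bfrom _ _ _)) ⬝
          (Q.mk ((Ar.id (.rel p.1 p.2)).tens (ins w)) ⧆ Q.mk (ins w')) =
        Q.mk ((Ar.id (.rel p.1 p.2)).tens (ins (wapp w w'))) ⬝
          Q.mk (((Ar.id (.rel p.1 p.2)).tens (ι (merge a l₃))).comp (Ar.bfrom _ _ _))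
      simp only [Q.mk_comp, Q.mk_tens]
      set e := Q.mk (Ar.id (Fm.rel p.1 p.2))
      calc (e ⧆ Q.mk (ι (merge b l₄)) ⬝ Q.mk (Ar.bfrom _ _ _)) ⬝
            ((e ⧆ Q.mk (ins w)) ⧆ Q.mk (ins w'))
          = e ⧆ Q.mk (ι (merge b l₄)) ⬝ (Q.mk (Ar.bfrom _ _ _) ⬝
              ((e ⧆ Q.mk (ins w)) ⧆ Q.mk (ins w'))) := Q.assoc _ _ _
        _ = e ⧆ Q.mk (ι (merge b l₄)) ⬝ ((e ⧆ (Q.mk (ins w) ⧆ Q.mk (ins w'))) ⬝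
              Q.mk (Ar.bfrom _ _ _)) := by rw [← Q.nat_b' e (Q.mk (ins w)) (Q.mk (ins w'))]
        _ = ((e ⧆ Q.mk (ι (merge b l₄))) ⬝ (e ⧆ (Q.mk (ins w) ⧆ Q.mk (ins w')))) ⬝
              Q.mk (Ar.bfrom _ _ _) := (Q.assoc _ _ _).symm
        _ = ((e ⬝ e) ⧆ (Q.mk (ι (merge b l₄)) ⬝ (Q.mk (ins w) ⧆ Q.mk (ins w')))) ⬝
              Q.mk (Ar.bfrom _ _ _) := by rw [Q.tens_comp]
        _ = (e ⧆ (Q.mk (ins (wapp w w')) ⬝ Q.mk (ι (merge a l₃)))) ⬝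
              Q.mk (Ar.bfrom _ _ _) := by
              rw [mergeins w w', show e ⬝ e = e from Q.comp_id e]
        _ = ((e ⧆ Q.mk (ins (wapp w w'))) ⬝ (e ⧆ Q.mk (ι (merge a l₃)))) ⬝
              Q.mk (Ar.bfrom _ _ _) := by rw [Q.tens_id_comp]
        _ = (e ⧆ Q.mk (ins (wapp w w'))) ⬝ ((e ⧆ Q.mk (ι (merge a l₃))) ⬝
              Q.mk (Ar.bfrom _ _ _)) := Q.assoc _ _ _
  | _, _, l₃, l₄, .new x p h (l₁ := a) (l₂ := b) w, w' => by
      cases h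
      show Q.mk (((Ar.id (.rel x x)).tens (ι (merge b l₄))).comp (Ar.bfrom _ _ _)) ⬝
          (Q.mk (((Ar.r x).tens (ins w)).comp (Ar.sfrom _)) ⧆ Q.mk (ins w')) =
        Q.mk (((Ar.r x).tens (ins (wapp w w'))).comp (Ar.sfrom _)) ⬝ Q.mk (ι (merge a l₃))
      simp only [Q.mk_comp, Q.mk_tens]
      set e := Q.mk (Ar.id (Fm.rel x x))
      set rr := Q.mk (Ar.r x)
      set iw := Q.mk (ins w)
      set iw' := Q.mk (ins w')
      set iwa := Q.mk (ins (wapp w w'))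
      set M := Q.mk (ι (merge b l₄))
      set Mo := Q.mk (ι (merge a l₃))
      calc (e ⧆ M ⬝ Q.mk (Ar.bfrom _ _ _)) ⬝ (((rr ⧆ iw) ⬝ Q.mk (Ar.sfrom _)) ⧆ iw')
          = (e ⧆ M ⬝ Q.mk (Ar.bfrom _ _ _)) ⬝
              (((rr ⧆ iw) ⬝ Q.mk (Ar.sfrom _)) ⧆ (iw' ⬝ Q.mk (Ar.id _))) := by
            rw [Q.comp_id]
        _ = (e ⧆ M ⬝ Q.mk (Ar.bfrom _ _ _)) ⬝
              (((rr ⧆ iw) ⧆ iw') ⬝ (Q.mk (Ar.sfrom _) ⧆ Q.mk (Ar.id _))) := by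
            rw [Q.tens_comp]
        _ = (e ⧆ M) ⬝ ((Q.mk (Ar.bfrom _ _ _) ⬝ ((rr ⧆ iw) ⧆ iw')) ⬝
              (Q.mk (Ar.sfrom _) ⧆ Q.mk (Ar.id _))) := by
            rw [Q.assoc, Q.assoc]
        _ = (e ⧆ M) ⬝ (((rr ⧆ (iw ⧆ iw')) ⬝ Q.mk (Ar.bfrom _ _ _)) ⬝
              (Q.mk (Ar.sfrom _) ⧆ Q.mk (Ar.id _))) := by
            rw [← Q.nat_b' rr iw iw']
        _ = ((e ⧆ M) ⬝ (rr ⧆ (iw ⧆ iw'))) ⬝ (Q.mk (Ar.bfrom _ _ _) ⬝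
              (Q.mk (Ar.sfrom _) ⧆ Q.mk (Ar.id _))) := by
            rw [Q.assoc, Q.assoc]
        _ = ((e ⬝ rr) ⧆ (M ⬝ (iw ⧆ iw'))) ⬝ Q.mk (Ar.sfrom _) := by
            rw [Q.tens_comp, sfrom_coh]
        _ = (rr ⧆ (iwa ⬝ Mo)) ⬝ Q.mk (Ar.sfrom _) := by
            rw [mergeins w w', Q.id_comp]
        _ = ((rr ⬝ Q.mk (Ar.id .top)) ⧆ (iwa ⬝ Mo)) ⬝ Q.mk (Ar.sfrom _) := by
            rw [Q.comp_id]
        _ = ((rr ⧆ iwa) ⬝ (Q.mk (Ar.id .top) ⧆ Mo)) ⬝ Q.mk (Ar.sfrom _) := by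
            rw [Q.tens_comp]
        _ = (rr ⧆ iwa) ⬝ ((Q.mk (Ar.id .top) ⧆ Mo) ⬝ Q.mk (Ar.sfrom _)) := Q.assoc _ _ _
        _ = (rr ⧆ iwa) ⬝ (Q.mk (Ar.sfrom _) ⬝ Mo) := by rw [Q.nat_s' Mo]
        _ = ((rr ⧆ iwa) ⬝ Q.mk (Ar.sfrom _)) ⬝ Mo := (Q.assoc _ _ _).symm


theorem LCT {A B : Fm V} (c : CT V A B) : L A = L B := by
  induction c <;> simp_all [L, List.append_assoc]

def castWord {l₁ l l' : List (V × V)} (h : l = l') (w : Word V l₁ l) : Word V l₁ l' :=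
  h ▸ w

theorem ins_cast_coh {l l' : List (V × V)} (h : l = l') :
    ∃ ct : CT V (objL l) (objL l'), Q.mk (ins (castWord h (allOld l))) = Q.mk (ι ct) := by
  subst h
  exact ⟨.id _, ins_allOld l⟩

theorem normalize_ct {A B : Fm V} (c : CT V A B) :
    ∃ w : Word V (L A) (L B), Q.mk (ι c) = Q.mk (NFt w) := by
  refine ⟨castWord (LCT c) (allOld (L A)), ?_⟩
  obtain ⟨ct, hct⟩ := ins_cast_coh (V := V) (LCT c)
  show _ = Q.mk ((ι (cinv (can B))).comp ((ins _).comp (ι (can A))))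
  rw [Q.mk_comp, Q.mk_comp, hct]
  exact coherence c (CT.comp (cinv (can B)) (CT.comp ct (can A)))

theorem NFt_comp {A B C : Fm V} (w₂ : Word V (L B) (L C)) (w₁ : Word V (L A) (L B)) :
    Q.mk (NFt w₂) ⬝ Q.mk (NFt w₁) = Q.mk (NFt (wcomp w₂ w₁)) := by
  show (Q.mk (ι (cinv (can C))) ⬝ (Q.mk (ins w₂) ⬝ Q.mk (ι (can B)))) ⬝
      (Q.mk (ι (cinv (can B))) ⬝ (Q.mk (ins w₁) ⬝ Q.mk (ι (can A)))) =
    Q.mk (ι (cinv (can C))) ⬝ (Q.mk (ins (wcomp w₂ w₁)) ⬝ Q.mk (ι (can A)))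
  rw [Q.assoc, Q.assoc, ← Q.assoc (Q.mk (ι (can B)))]
  rw [(cinv_inv (can B)).2, Q.id_comp, ← Q.assoc (Q.mk (ins w₂)), ← Q.mk_comp,
    wcomp_eqv w₂ w₁]

theorem NFt_tens {A₁ B₁ A₂ B₂ : Fm V} (w₁ : Word V (L A₁) (L B₁)) (w₂ : Word V (L A₂) (L B₂)) :
    Q.mk (NFt w₁) ⧆ Q.mk (NFt w₂) =
      Q.mk (NFt (A := A₁.and A₂) (B := B₁.and B₂) (wapp w₁ w₂)) := by
  have hcoh : Q.mk (ι ((cinv (can B₁)).tens (cinv (can B₂)))) =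
      Q.mk (ι (CT.comp (cinv (can (B₁.and B₂))) (merge (L B₁) (L B₂)))) :=
    coherence _ _
  show (Q.mk (ι (cinv (can B₁))) ⬝ (Q.mk (ins w₁) ⬝ Q.mk (ι (can A₁)))) ⧆
      (Q.mk (ι (cinv (can B₂))) ⬝ (Q.mk (ins w₂) ⬝ Q.mk (ι (can A₂)))) =
    Q.mk (ι (cinv (can (B₁.and B₂)))) ⬝ (Q.mk (ins (wapp w₁ w₂)) ⬝
      (Q.mk (ι (merge (L A₁) (L A₂))) ⬝ (Q.mk (ι (can A₁)) ⧆ Q.mk (ι (can A₂)))))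
  rw [Q.tens_comp, Q.tens_comp]
  have hcoh' : Q.mk (ι (cinv (can B₁))) ⧆ Q.mk (ι (cinv (can B₂))) =
      Q.mk (ι (cinv (can (B₁.and B₂)))) ⬝ Q.mk (ι (merge (L B₁) (L B₂))) := hcoh
  rw [hcoh']
  rw [Q.assoc, ← Q.assoc (Q.mk (ι (merge (L B₁) (L B₂)))), mergeins w₁ w₂]
  rw [Q.assoc]

theorem normalize : ∀ {A B : Fm V} (f : Ar V A B),
    ∃ w : Word V (L A) (L B), Q.mk f = Q.mk (NFt w)
  | _, _, .id A => normalize_ct (.id A)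
  | _, _, .bto A B C => normalize_ct (.bto A B C)
  | _, _, .bfrom A B C => normalize_ct (.bfrom A B C)
  | _, _, .dto A => normalize_ct (.dto A)
  | _, _, .dfrom A => normalize_ct (.dfrom A)
  | _, _, .sto A => normalize_ct (.sto A)
  | _, _, .sfrom A => normalize_ct (.sfrom A)
  | _, _, .r x => by
      refine ⟨.new x (x, x) rfl .nil, ?_⟩
      show Q.mk (Ar.r x) = Q.mk ((Ar.dto (.rel x x)).comp
        ((((Ar.r x).tens (Ar.id .top)).comp (Ar.sfrom .top)).comp (Ar.id .top)))
      simp only [Q.mk_comp, Q.mk_tens]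
      rw [Q.comp_id]
      have hds : Q.mk (Ar.sfrom (V := V) .top) = Q.mk (Ar.dfrom .top) :=
        coherence (CT.sfrom .top) (CT.dfrom .top)
      rw [hds]
      calc Q.mk (Ar.r x)
          = (Q.mk (Ar.r x) ⬝ Q.mk (Ar.dto .top)) ⬝ Q.mk (Ar.dfrom .top) := by
            rw [Q.assoc, Q.inv_d.2, Q.comp_id]
        _ = (Q.mk (Ar.dto (.rel x x)) ⬝ (Q.mk (Ar.r x) ⧆ Q.mk (Ar.id .top))) ⬝
            Q.mk (Ar.dfrom .top) := by rw [Q.nat_d0 (Q.mk (Ar.r x))]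
        _ = Q.mk (Ar.dto (.rel x x)) ⬝ ((Q.mk (Ar.r x) ⧆ Q.mk (Ar.id .top)) ⬝
            Q.mk (Ar.dfrom .top)) := Q.assoc _ _ _
  | _, _, .comp g f => by
      obtain ⟨w₁, h₁⟩ := normalize f
      obtain ⟨w₂, h₂⟩ := normalize g
      exact ⟨wcomp w₂ w₁, by rw [Q.mk_comp, h₁, h₂, NFt_comp]⟩
  | _, _, .tens f g => by
      obtain ⟨w₁, h₁⟩ := normalize f
      obtain ⟨w₂, h₂⟩ := normalize g
      exact ⟨wapp w₁ w₂, by rw [Q.mk_tens, h₁, h₂, NFt_tens]⟩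

/-! ### Injectivity of the normal form -/

def ISO {α β : Type} (m : Match α β) : Prop :=
  ∃ (φ : β → α) (ψ : α → β) (hψφ : ∀ b, ψ (φ b) = b) (hφψ : ∀ a, φ (ψ a) = a),
    m = Match.ofBij φ ψ hψφ hφψ

theorem ISO.comp {α β γ : Type} {m : Match α β} {m' : Match β γ}
    (hm : ISO m) (hm' : ISO m') : ISO (m.comp m') := by
  obtain ⟨φ, ψ, h1, h2, rfl⟩ := hm
  obtain ⟨φ', ψ', h1', h2', rfl⟩ := hm'
  refine ⟨φ ∘ φ', ψ' ∘ ψ, fun b => by simp [h1, h1'], fun a => by simp [h2, h2'], ?_⟩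
  apply Match.ext'
  · funext c
    show compS (Match.ofBij φ ψ h1 h2) (Match.ofBij φ' ψ' h1' h2') c = Sum.inl (φ (φ' c))
    simp [compS, Match.ofBij]
  · rfl

theorem ISO.tens {α β γ δ : Type} {m : Match α β} {m' : Match γ δ}
    (hm : ISO m) (hm' : ISO m') : ISO (m.tens m') := by
  obtain ⟨φ, ψ, h1, h2, rfl⟩ := hm
  obtain ⟨φ', ψ', h1', h2', rfl⟩ := hm'
  refine ⟨Sum.map φ φ', Sum.map ψ ψ',
    fun b => by rcases b with b | b <;> simp [h1, h1'],
    fun a => by rcases a with a | a <;> simp [h2, h2'], ?_⟩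
  apply Match.ext'
  · funext c
    rcases c with c | c <;> simp [Match.tens, Match.ofBij]
  · rfl

theorem msem_ct_iso {A B : Fm V} (c : CT V A B) : ISO (Msem (ι c)) := by
  induction c with
  | id A => exact ⟨_, _, _, _, rfl⟩
  | comp g f ihg ihf => exact ISO.comp ihf ihg
  | tens f g ihf ihg => exact ISO.tens ihf ihg
  | bto A B C => exact ⟨_, _, _, _, rfl⟩
  | bfrom A B C => exact ⟨_, _, _, _, rfl⟩
  | dto A => exact ⟨_, _, _, _, rfl⟩
  | dfrom A => exact ⟨_, _, _, _, rfl⟩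
  | sto A => exact ⟨_, _, _, _, rfl⟩
  | sfrom A => exact ⟨_, _, _, _, rfl⟩

theorem comp_cancel {α β γ δ : Type} {e : Match α β} {e' : Match γ δ}
    (he : ISO e) (he' : ISO e') {m m' : Match β γ}
    (h : (e.comp m).comp e' = (e.comp m').comp e') : m = m' := by
  obtain ⟨φ, ψ, h1, h2, rfl⟩ := he
  obtain ⟨φ', ψ', h1', h2', rfl⟩ := he'
  have key : ∀ (n : Match β γ) (d : δ),
      (((Match.ofBij φ ψ h1 h2).comp n).comp (Match.ofBij φ' ψ' h1' h2')).s d =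
        (n.s (φ' d)).map φ ψ' := by
    intro n d
    show compS ((Match.ofBij φ ψ h1 h2).comp n) (Match.ofBij φ' ψ' h1' h2') d = _
    rcases hn : n.s (φ' d) with b | c <;>
      simp [compS, Match.comp, Match.ofBij, hn]
  have hφ_inj : Function.Injective φ := fun x y hxy => by rw [← h1 x, hxy, h1]
  have hψ'_inj : Function.Injective ψ' := fun x y hxy => by rw [← h2' x, hxy, h2']
  apply Match.ext'
  · funext c
    have := congrFun (congrArg Match.s h) (ψ' c)
    rw [key, key, h2'] at this
    rcases hx : m.s c with b | c₀ <;> rcases hy : m'.s c with b' | c₁ <;>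
      rw [hx, hy] at this <;> simp only [Sum.map_inl, Sum.map_inr,
        Sum.inl.injEq, Sum.inr.injEq, reduceCtorEq] at this
    · rw [hφ_inj this]
    · rw [hψ'_inj this]
  · funext b
    have := congrFun (congrArg Match.i h) (φ b)
    have hL : ∀ (n : Match β γ),
        (((Match.ofBij φ ψ h1 h2).comp n).comp (Match.ofBij φ' ψ' h1' h2')).i =
          fun a => ψ' (n.i (ψ a)) := fun n => rfl
    rw [hL, hL] at this
    dsimp only at this
    rw [h1] at this
    exact hψ'_inj this

theorem msem_ins_old_s {p : V × V} {l₁ l₂ : List (V × V)} (w : Word V l₁ l₂)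
    (o : Occ (objL l₂)) :
    (Msem (ins (.old p w))).s (Sum.inr o) = ((Msem (ins w)).s o).map Sum.inr Sum.inr := rfl

theorem msem_ins_old_i {p : V × V} {l₁ l₂ : List (V × V)} (w : Word V l₁ l₂)
    (a : Occ (objL l₁)) :
    (Msem (ins (.old p w))).i (Sum.inr a) = Sum.inr ((Msem (ins w)).i a) := rfl

theorem msem_ins_old_i_hd {p : V × V} {l₁ l₂ : List (V × V)} (w : Word V l₁ l₂) :
    (Msem (ins (.old p w))).i (Sum.inl true) = Sum.inl true := rfl

theorem msem_ins_new_i {x : V} {l₁ l₂ : List (V × V)} (w : Word V l₁ l₂)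
    (a : Occ (objL l₁)) :
    (Msem (ins (.new x (x, x) rfl w))).i a = Sum.inr ((Msem (ins w)).i a) := rfl

theorem msem_ins_new_s {x : V} {l₁ l₂ : List (V × V)} (w : Word V l₁ l₂)
    (o : Occ (objL l₂)) :
    (Msem (ins (.new x (x, x) rfl w))).s (Sum.inr o) =
      ((Msem (ins w)).s o).map (fun z => z) Sum.inr := by
  rcases h : (Msem (ins w)).s o with a | b <;>
    · show compS (Msem (Ar.sfrom (objL l₁))) (Msem ((Ar.r x).tens (ins w))) (Sum.inr o) = _
      simp [compS, Match.tens, Match.ofBij, Msem, ins, h] <;> rfl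

theorem map_rr_inj {α β γ δ : Type} {x y : α ⊕ β}
    (h : Sum.map (@Sum.inr γ α) (@Sum.inr δ β) x = Sum.map Sum.inr Sum.inr y) : x = y := by
  rcases x with a | b <;> rcases y with c | d <;> simp_all

theorem map_ir_inj {α β δ : Type} {x y : α ⊕ β}
    (h : Sum.map (fun z => z) (@Sum.inr δ β) x = Sum.map (fun z => z) Sum.inr y) : x = y := by
  rcases x with a | b <;> rcases y with c | d <;> simp_all

theorem word_inj : ∀ {l₁ l₂ : List (V × V)} (w w' : Word V l₁ l₂),
    Msem (ins w) = Msem (ins w') → w = w'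
  | _, _, .nil, .nil, _ => rfl
  | _, _, .old p w, w', h => by
      cases w' with
      | old q w'' =>
          have hs : ∀ o, (Msem (ins w)).s o = (Msem (ins w'')).s o := by
            intro o
            have h2 := congrFun (congrArg Match.s h) (Sum.inr o)
            rw [msem_ins_old_s, msem_ins_old_s] at h2
            exact map_rr_inj h2
          have hi : ∀ a, (Msem (ins w)).i a = (Msem (ins w'')).i a := by
            intro a
            have h2 := congrFun (congrArg Match.i h) (Sum.inr a)
            rw [msem_ins_old_i, msem_ins_old_i] at h2
            exact Sum.inr.inj h2
          rw [word_inj w w'' (Match.ext' (funext hs) (funext hi))]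
      | new x' q hq w'' =>
          exfalso
          cases hq
          have h2 := congrFun (congrArg Match.i h) (Sum.inl true)
          erw [msem_ins_old_i_hd, msem_ins_new_i] at h2
          simp at h2
  | _, _, .new x p hp w, w', h => by
      cases hp
      cases w' with
      | old q w'' =>
          exfalso
          have h2 := congrFun (congrArg Match.i h) (Sum.inl true)
          erw [msem_ins_old_i_hd, msem_ins_new_i] at h2
          simp at h2
      | new x' q hq w'' =>
          have hx : x = x' := by injection hq with e1 _
          cases hx
          have hq' : hq = rfl := rfl
          cases hq'
          have hs : ∀ o, (Msem (ins w)).s o = (Msem (ins w'')).s o := by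
            intro o
            have h2 := congrFun (congrArg Match.s h) (Sum.inr o)
            rw [msem_ins_new_s, msem_ins_new_s] at h2
            exact map_ir_inj h2
          have hi : ∀ a, (Msem (ins w)).i a = (Msem (ins w'')).i a := by
            intro a
            have h2 := congrFun (congrArg Match.i h) a
            rw [msem_ins_new_i, msem_ins_new_i] at h2
            exact Sum.inr.inj h2
          rw [word_inj w w'' (Match.ext' (funext hs) (funext hi))]



/-- coherence for the category defined like M≤ but lacking the
arrows t_{x,y,z} and all the specific equations of M≤. -/
theorem stmt5 {V : Type} {A B : Fm V} (f g : Ar V A B) (h : GRel f = GRel g) :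
    Eqv f g := by
  obtain ⟨w₁, hf⟩ := normalize f
  obtain ⟨w₂, hg⟩ := normalize g
  have hM : Msem f = Msem g := R_inj (by rw [← grel_eq f, ← grel_eq g]; exact h)
  have hN : Msem (NFt w₁) = Msem (NFt w₂) := by
    rw [← msem_sound (Q.exact hf), ← msem_sound (Q.exact hg)]
    exact hM
  have hmid : Msem (ins w₁) = Msem (ins w₂) := by
    have h1 : ((Msem (ι (can A))).comp (Msem (ins w₁))).comp (Msem (ι (cinv (can B)))) =
        ((Msem (ι (can A))).comp (Msem (ins w₂))).comp (Msem (ι (cinv (can B)))) := hN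
    exact comp_cancel (msem_ct_iso (can A)) (msem_ct_iso (cinv (can B))) h1
  have hw : w₁ = w₂ := word_inj w₁ w₂ hmid
  subst hw
  exact Eqv.trans (Q.exact hf) (Eqv.symm (Q.exact hg))

end DP
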